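/- Let P be a finite poset and δ : P → {L, R}, and suppose there exist x, y, z ∈ P with z < x, z < y, x incomparable to y, and δ(x) ≠ δ(y). Then the number of δ-legal permutations of P is strictly less than the number of linear extensions of P. -/

import Mathlib

open scoped Classical

/-- `σ` is `δ`-legal: each `x` with `δ x = true` (i.e. `L`) occurs before every element
strictly below it, and each `x` with `δ x = false` (i.e. `R`) occurs after every element
strictly below it. -/
def DeltaLegal {n : ℕ} {P : Type*} [PartialOrder P] (δ : P → Bool) (σ : Fin n ≃ P) : Prop :=
  ∀ x y : P, y < x →
    (δ x = true → σ.symm x < σ.symm y) ∧ (δ x = false → σ.symm y < σ.symm x)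

namespace LegalAux
variable {α : Type*} [PartialOrder α]

def Rc (δ : α → Bool) (p q : α) : Prop :=
  (p < q → δ q = false) ∧ (q < p → δ p = true)

open scoped Classical in
noncomputable def legals (δ : α → Bool) (s : Finset α) : Finset (List α) :=
  s.toList.permutations.toFinset.filter (fun l => l.Pairwise (Rc δ))

lemma mem_legals {δ : α → Bool} {s : Finset α} {l : List α} :
    l ∈ legals δ s ↔ l.Nodup ∧ l.toFinset = s ∧ l.Pairwise (Rc δ) := by
  classical
  simp only [legals, Finset.mem_filter, List.mem_toFinset, List.mem_permutations]
  constructor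
  · rintro ⟨hp, hr⟩
    refine ⟨hp.nodup_iff.2 s.nodup_toList, ?_, hr⟩
    rw [List.toFinset_eq_of_perm _ _ hp, Finset.toList_toFinset]
  · rintro ⟨hn, hf, hr⟩
    refine ⟨?_, hr⟩
    apply List.perm_of_nodup_nodup_toFinset_eq hn s.nodup_toList
    rw [hf, Finset.toList_toFinset]

noncomputable def Nc (δ : α → Bool) (s : Finset α) : ℕ := (legals δ s).card
noncomputable def ec (s : Finset α) : ℕ := Nc (fun _ => false) s

open scoped Classical in
noncomputable def MinF (s : Finset α) : Finset α := s.filter (fun m => ∀ b ∈ s, ¬ b < m)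

open scoped Classical in
noncomputable def Fst (δ : α → Bool) (s : Finset α) : Finset α :=
  s.filter (fun a => (δ a = true ∨ ∀ b ∈ s, ¬ b < a) ∧ ∀ v ∈ s, a < v → δ v = false)

lemma Fst_false (s : Finset α) : Fst (fun _ => false) s = MinF s := by
  classical
  ext a
  simp [Fst, MinF]

lemma cons_mem_legals_iff {δ : α → Bool} {s : Finset α} {a : α} {t : List α} :
    (a :: t) ∈ legals δ s ↔ a ∈ Fst δ s ∧ t ∈ legals δ (s.erase a) := by
  classical
  simp only [mem_legals, List.nodup_cons, List.toFinset_cons, List.pairwise_cons]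
  constructor
  · rintro ⟨⟨hat, htn⟩, hf, hcons, hp⟩
    have ha : a ∈ s := by rw [← hf]; exact Finset.mem_insert_self _ _
    have htf : t.toFinset = s.erase a := by
      rw [← hf, Finset.erase_insert (by simpa using hat)]
    have hmem : ∀ b, b ∈ s → b ≠ a → b ∈ t := by
      intro b hb hba
      rw [← List.mem_toFinset, htf]
      exact Finset.mem_erase.2 ⟨hba, hb⟩
    refine ⟨Finset.mem_filter.2 ⟨ha, ?_, ?_⟩, htn, htf, hp⟩
    · by_cases hda : δ a = true
      · exact Or.inl hda
      · refine Or.inr fun b hb hba => ?_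
        have hbne : b ≠ a := ne_of_lt hba
        exact hda ((hcons b (hmem b hb hbne)).2 hba)
    · intro v hv hav
      have hvne : v ≠ a := (ne_of_lt hav).symm
      exact (hcons v (hmem v hv hvne)).1 hav
  · rintro ⟨haF, htn, htf, hp⟩
    obtain ⟨ha, hc1, hc2⟩ := Finset.mem_filter.1 haF
    have hat : a ∉ t := by
      intro hmem
      have : a ∈ s.erase a := by rw [← htf]; exact List.mem_toFinset.2 hmem
      exact (Finset.mem_erase.1 this).1 rfl
    refine ⟨⟨hat, htn⟩, ?_, ?_, hp⟩
    · rw [htf, Finset.insert_erase ha]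
    · intro b hb
      have hbs : b ∈ s.erase a := by rw [← htf]; exact List.mem_toFinset.2 hb
      obtain ⟨hbne, hbs'⟩ := Finset.mem_erase.1 hbs
      constructor
      · intro hab; exact hc2 b hbs' hab
      · intro hba
        rcases hc1 with h | h
        · exact h
        · exact absurd hba (h b hbs')

lemma legals_decomp {δ : α → Bool} {s : Finset α} (hs : s.Nonempty) :
    legals δ s = (Fst δ s).biUnion
      (fun a => (legals δ (s.erase a)).image (a :: ·)) := by
  classical
  ext l
  simp only [Finset.mem_biUnion, Finset.mem_image]
  constructor
  · intro hl
    obtain ⟨a, t, rfl⟩ : ∃ a t, l = a :: t := by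
      cases l with
      | nil =>
        exfalso
        have := (mem_legals.1 hl).2.1
        simp only [List.toFinset_nil] at this
        exact hs.ne_empty this.symm
      | cons a t => exact ⟨a, t, rfl⟩
    obtain ⟨h1, h2⟩ := cons_mem_legals_iff.1 hl
    exact ⟨a, h1, t, h2, rfl⟩
  · rintro ⟨a, ha, t, ht, rfl⟩
    exact cons_mem_legals_iff.2 ⟨ha, ht⟩

lemma Nc_rec {δ : α → Bool} {s : Finset α} (hs : s.Nonempty) :
    Nc δ s = ∑ a ∈ Fst δ s, Nc δ (s.erase a) := by
  classical
  rw [Nc, legals_decomp hs, Finset.card_biUnion]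
  · refine Finset.sum_congr rfl fun a _ => ?_
    rw [Finset.card_image_of_injective _ (List.cons_injective)]
    rfl
  · intro a _ b _ hab
    refine Finset.disjoint_left.2 fun l hla hlb => hab ?_
    obtain ⟨ta, _, rfl⟩ := Finset.mem_image.1 hla
    obtain ⟨tb, _, h⟩ := Finset.mem_image.1 hlb
    exact (List.cons.injEq .. ▸ h.symm).1

lemma ec_rec {s : Finset α} (hs : s.Nonempty) :
    ec s = ∑ m ∈ MinF s, ec (s.erase m) := by
  rw [ec, Nc_rec hs, Fst_false]; rfl

lemma MinF_erase_eq {s : Finset α} {a : α} (hna : ∃ z ∈ s, z < a) :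
    MinF (s.erase a) = MinF s := by
  classical
  obtain ⟨z, hz, hza⟩ := hna
  ext m
  simp only [MinF, Finset.mem_filter, Finset.mem_erase]
  constructor
  · rintro ⟨⟨hma, hms⟩, hmin⟩
    refine ⟨hms, fun b hb hbm => ?_⟩
    by_cases hba : b = a
    · subst hba
      have hzm : z < m := lt_trans hza hbm
      have hzne : z ≠ b := ne_of_lt hza
      exact hmin z ⟨hzne, hz⟩ hzm
    · exact hmin b ⟨hba, hb⟩ hbm
  · rintro ⟨hms, hmin⟩
    have hma : m ≠ a := by
      rintro rfl
      exact hmin z hz hza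
    exact ⟨⟨hma, hms⟩, fun b hb => hmin b hb.2⟩

lemma legals_empty {δ : α → Bool} : legals δ (∅ : Finset α) = {[]} := by
  classical
  ext l
  simp only [mem_legals, Finset.mem_singleton]
  constructor
  · rintro ⟨_, hf, _⟩
    exact (List.toFinset_eq_empty_iff l).1 hf
  · rintro rfl
    simp

lemma ec_pos : ∀ (s : Finset α), 0 < ec s := by
  suffices h : ∀ (n : ℕ) (s : Finset α), s.card = n → 0 < ec s by
    intro s; exact h s.card s rfl
  intro n
  induction n using Nat.strong_induction_on with
  | _ n ih =>
    intro s hcard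
    by_cases hs : s.Nonempty
    · obtain ⟨m, hm, hmin⟩ := s.exists_minimal hs
      have hmM : m ∈ MinF s := by
        simp only [MinF, Finset.mem_filter]; exact ⟨hm, fun b hb hbm => lt_irrefl _ (lt_of_lt_of_le hbm (hmin hb hbm.le))⟩
      have hlt : (s.erase m).card < n := hcard ▸ Finset.card_erase_lt_of_mem hm
      have := ih _ hlt (s.erase m) rfl
      calc 0 < ec (s.erase m) := this
        _ ≤ ∑ m' ∈ MinF s, ec (s.erase m') :=
          Finset.single_le_sum (f := fun m' => ec (s.erase m')) (fun _ _ => Nat.zero_le _) hmM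
        _ = ec s := (ec_rec hs).symm
    · rw [Finset.not_nonempty_iff_eq_empty.1 hs]
      rw [ec, Nc, legals_empty]
      simp

lemma mem_MinF {s : Finset α} {m : α} :
    m ∈ MinF s ↔ m ∈ s ∧ ∀ b ∈ s, ¬ b < m := by
  classical
  simp [MinF]

lemma MinF_subset {s : Finset α} : MinF s ⊆ s := by
  classical
  exact Finset.filter_subset _ _

open scoped Classical in
lemma sum_sum_eq_sum_product {X : Finset α} {g : α → Finset α} {s : Finset α}
    (hg : ∀ m ∈ X, g m ⊆ s) (f : α → α → ℕ) :
    ∑ m ∈ X, ∑ v ∈ g m, f m v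
      = ∑ p ∈ (X ×ˢ s).filter (fun p => p.2 ∈ g p.1), f p.1 p.2 := by
  rw [Finset.sum_filter, Finset.sum_product]
  refine Finset.sum_congr rfl fun m hm => ?_
  show ∑ v ∈ g m, f m v = ∑ y ∈ s, if y ∈ g m then f m y else 0
  rw [Finset.sum_ite_mem, Finset.inter_eq_right.2 (hg m hm)]

open scoped Classical in
theorem dkey : ∀ (n : ℕ) (s A : Finset α), s.card ≤ n → A ⊆ s →
    (∀ a ∈ A, ∀ b ∈ A, a ≠ b → ¬ a < b) →
    (∀ a ∈ A, ∃ z ∈ s, z < a) →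
    ∑ a ∈ A, ec (s.erase a) ≤
      ∑ m ∈ (MinF s).filter (fun m => ∃ a ∈ A, m < a), ec (s.erase m) := by
  intro n
  induction n with
  | zero =>
    intro s A hcard hAs hanti hnm
    have hs : s = ∅ := Finset.card_eq_zero.1 (Nat.le_zero.1 hcard)
    subst hs
    have hA : A = ∅ := Finset.subset_empty.1 hAs
    subst hA
    simp
  | succ n ih =>
    intro s A hcard hAs hanti hnm
    -- abbreviations
    set M : Finset α := (MinF s).filter (fun m => ∃ a ∈ A, m < a) with hM
    -- each a ∈ A is distinct from every minimal element
    have hAnotmin : ∀ a ∈ A, ∀ m ∈ MinF s, a ≠ m := by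
      intro a ha m hm h
      subst h
      obtain ⟨z, hz, hza⟩ := hnm a ha
      exact (mem_MinF.1 hm).2 z hz hza
    -- Step 1+2 : expand LHS
    have step1 : ∑ a ∈ A, ec (s.erase a)
        = ∑ m ∈ MinF s, ∑ a ∈ A, ec ((s.erase m).erase a) := by
      rw [Finset.sum_comm]
      refine Finset.sum_congr rfl fun a ha => ?_
      obtain ⟨z, hz, hza⟩ := hnm a ha
      have hne : (s.erase a).Nonempty :=
        ⟨z, Finset.mem_erase.2 ⟨ne_of_lt hza, hz⟩⟩
      rw [ec_rec hne, MinF_erase_eq ⟨z, hz, hza⟩]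
      refine Finset.sum_congr rfl fun m _ => ?_
      rw [Finset.erase_right_comm]
    -- the filtered split and IH application per m
    have step2 : ∀ m ∈ MinF s,
        ∑ a ∈ A, ec ((s.erase m).erase a)
          ≤ (∑ v ∈ (MinF (s.erase m)).filter
                (fun v => ∃ a ∈ A.filter (fun a => ∃ z ∈ s.erase m, z < a), v < a),
              ec ((s.erase m).erase v))
            + ∑ a ∈ A.filter (fun a => ¬ ∃ z ∈ s.erase m, z < a),
                ec ((s.erase m).erase a) := by
      intro m hm
      rw [← Finset.sum_filter_add_sum_filter_not A (fun a => ∃ z ∈ s.erase m, z < a)]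
      have hsub : A.filter (fun a => ∃ z ∈ s.erase m, z < a) ⊆ s.erase m := by
        intro a ha
        obtain ⟨haA, _⟩ := Finset.mem_filter.1 ha
        exact Finset.mem_erase.2 ⟨hAnotmin a haA m hm, hAs haA⟩
      have hcard' : (s.erase m).card ≤ n := by
        have := Finset.card_erase_of_mem (MinF_subset hm)
        omega
      have := ih (s.erase m) (A.filter (fun a => ∃ z ∈ s.erase m, z < a)) hcard' hsub
        (fun a ha b hb hab => hanti a (Finset.mem_filter.1 ha).1 b (Finset.mem_filter.1 hb).1 hab)
        (fun a ha => (Finset.mem_filter.1 ha).2)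
      exact Nat.add_le_add_right this _
    -- product-set machinery
    set g2 : α → Finset α := fun m => (MinF (s.erase m)).filter
        (fun v => ∃ a ∈ A.filter (fun a => ∃ z ∈ s.erase m, z < a), v < a) with hg2
    set g1 : α → Finset α := fun m => A.filter (fun a => ¬ ∃ z ∈ s.erase m, z < a) with hg1
    set U2 : Finset (α × α) := ((MinF s) ×ˢ s).filter (fun p => p.2 ∈ g2 p.1) with hU2def
    set U1 : Finset (α × α) := ((MinF s) ×ˢ s).filter (fun p => p.2 ∈ g1 p.1) with hU1def
    set W : α × α → ℕ := fun p => ec ((s.erase p.1).erase p.2) with hW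
    have hg2s : ∀ m ∈ MinF s, g2 m ⊆ s := fun m _ =>
      (Finset.filter_subset _ _).trans ((MinF_subset).trans (Finset.erase_subset _ _))
    have hg1s : ∀ m ∈ MinF s, g1 m ⊆ s := fun m _ =>
      (Finset.filter_subset _ _).trans hAs
    -- facts about U1 and U2
    have hU1fact : ∀ p ∈ U1, p.1 ∈ MinF s ∧ p.2 ∈ A ∧ p.1 < p.2 ∧
        (∀ b ∈ s.erase p.1, ¬ b < p.2) := by
      intro p hp
      obtain ⟨hmem, hpg⟩ := Finset.mem_filter.1 hp
      have hp1 : p.1 ∈ MinF s := (Finset.mem_product.1 hmem).1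
      obtain ⟨hp2A, hnpm⟩ := Finset.mem_filter.1 hpg
      push_neg at hnpm
      obtain ⟨z, hz, hzp2⟩ := hnm p.2 hp2A
      have hzp1 : z = p.1 := by
        by_contra hne
        exact hnpm z (Finset.mem_erase.2 ⟨hne, hz⟩) hzp2
      exact ⟨hp1, hp2A, hzp1 ▸ hzp2, fun b hb => hnpm b hb⟩
    have hU2fact : ∀ p ∈ U2, p.1 ∈ MinF s ∧ p.2 ∈ MinF (s.erase p.1) ∧
        ∃ a ∈ A, p.2 < a := by
      intro p hp
      obtain ⟨hmem, hpg⟩ := Finset.mem_filter.1 hp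
      obtain ⟨hpmin, a, haf, hpa⟩ := Finset.mem_filter.1 hpg
      exact ⟨(Finset.mem_product.1 hmem).1, hpmin, a, (Finset.mem_filter.1 haf).1, hpa⟩
    -- p.2 ∉ A for p ∈ U2
    have hU2notA : ∀ p ∈ U2, p.2 ∉ A := by
      intro p hp hp2A
      obtain ⟨-, -, a, haA, hpa⟩ := hU2fact p hp
      exact hanti p.2 hp2A a haA (ne_of_lt hpa) hpa
    -- the reindexing map
    set φ : α × α → α × α := fun p => if ∃ a ∈ A, p.1 < a then p else (p.2, p.1) with hφ
    have hWφ : ∀ p, W (φ p) = W p := by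
      intro p
      by_cases hc : ∃ a ∈ A, p.1 < a
      · simp only [hφ, if_pos hc]
      · simp only [hφ, if_neg hc, hW]
        exact congrArg ec Finset.erase_right_comm
    have key1 : ∀ p, p ∈ U1 ∪ U2 → (p.2 ∈ A ∨ ∃ a ∈ A, p.2 < a) := by
      intro p hp
      rcases Finset.mem_union.1 hp with h | h
      · exact Or.inl (hU1fact p h).2.1
      · exact Or.inr (hU2fact p h).2.2
    have key2 : ∀ p, p ∈ U1 ∪ U2 → p.1 ∉ A := by
      intro p hp
      have hp1 : p.1 ∈ MinF s := by
        rcases Finset.mem_union.1 hp with h | h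
        · exact (hU1fact p h).1
        · exact (hU2fact p h).1
      exact fun hA' => hAnotmin p.1 hA' p.1 hp1 rfl
    -- injectivity of φ on U1 ∪ U2
    have hinj : ∀ p ∈ U1 ∪ U2, ∀ q ∈ U1 ∪ U2, φ p = φ q → p = q := by
      intro p hp q hq heq
      by_cases cp : ∃ a ∈ A, p.1 < a <;> by_cases cq : ∃ a ∈ A, q.1 < a
      · simp only [hφ, if_pos cp, if_pos cq] at heq; exact heq
      · exfalso
        simp only [hφ, if_pos cp, if_neg cq] at heq
        have h2 : p.2 = q.1 := by rw [heq]
        rcases key1 p hp with hA' | hA'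
        · exact key2 q hq (h2 ▸ hA')
        · exact cq (h2 ▸ hA')
      · exfalso
        simp only [hφ, if_neg cp, if_pos cq] at heq
        have h2 : q.2 = p.1 := by rw [← heq]
        rcases key1 q hq with hA' | hA'
        · exact key2 p hp (h2 ▸ hA')
        · exact cp (h2 ▸ hA')
      · simp only [hφ, if_neg cp, if_neg cq, Prod.mk.injEq] at heq
        exact Prod.ext heq.2 heq.1
    -- target set
    set T : Finset (α × α) := (M ×ˢ s).filter (fun p => p.2 ∈ MinF (s.erase p.1)) with hT
    -- φ maps U1 ∪ U2 into T
    have hmapsto : ∀ p ∈ U1 ∪ U2, φ p ∈ T := by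
      intro p hp
      rcases Finset.mem_union.1 hp with h | h
      · -- p ∈ U1 ; kept
        obtain ⟨hp1, hp2A, hlt, hminpr⟩ := hU1fact p h
        have hc : ∃ a ∈ A, p.1 < a := ⟨p.2, hp2A, hlt⟩
        simp only [hφ, if_pos hc]
        refine Finset.mem_filter.2 ⟨Finset.mem_product.2 ⟨?_, ?_⟩, ?_⟩
        · exact Finset.mem_filter.2 ⟨hp1, hc⟩
        · exact hAs hp2A
        · exact mem_MinF.2 ⟨Finset.mem_erase.2 ⟨(ne_of_lt hlt).symm, hAs hp2A⟩, hminpr⟩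
      · obtain ⟨hp1, hp2min, a, haA, hpa⟩ := hU2fact p h
        by_cases hc : ∃ a ∈ A, p.1 < a
        · simp only [hφ, if_pos hc]
          refine Finset.mem_filter.2 ⟨Finset.mem_product.2 ⟨?_, ?_⟩, hp2min⟩
          · exact Finset.mem_filter.2 ⟨hp1, hc⟩
          · exact (MinF_subset.trans (Finset.erase_subset _ _)) hp2min
        · simp only [hφ, if_neg hc]
          have hp2s : p.2 ∈ s := (MinF_subset.trans (Finset.erase_subset _ _)) hp2min
          have hne : p.1 ≠ p.2 := by
            intro h
            exact hc ⟨a, haA, by rw [h]; exact hpa⟩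
          have hnlt : ¬ p.1 < p.2 := fun hlt => hc ⟨a, haA, lt_trans hlt hpa⟩
          have hp2minS : p.2 ∈ MinF s := by
            refine mem_MinF.2 ⟨hp2s, fun b hb hblt => ?_⟩
            by_cases hbp1 : b = p.1
            · exact hnlt (hbp1 ▸ hblt)
            · exact (mem_MinF.1 hp2min).2 b (Finset.mem_erase.2 ⟨hbp1, hb⟩) hblt
          refine Finset.mem_filter.2 ⟨Finset.mem_product.2 ⟨?_, MinF_subset hp1⟩, ?_⟩
          · exact Finset.mem_filter.2 ⟨hp2minS, a, haA, hpa⟩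
          · exact mem_MinF.2 ⟨Finset.mem_erase.2 ⟨hne, MinF_subset hp1⟩,
              fun b hb => (mem_MinF.1 hp1).2 b (Finset.mem_erase.1 hb).2⟩
    -- disjointness of U1, U2
    have hdisj : Disjoint U1 U2 := by
      refine Finset.disjoint_left.2 fun p hp1 hp2 => ?_
      exact hU2notA p hp2 (hU1fact p hp1).2.1
    -- now the chain
    calc ∑ a ∈ A, ec (s.erase a)
        = ∑ m ∈ MinF s, ∑ a ∈ A, ec ((s.erase m).erase a) := step1
      _ ≤ ∑ m ∈ MinF s, ((∑ v ∈ g2 m, ec ((s.erase m).erase v))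
            + ∑ a ∈ g1 m, ec ((s.erase m).erase a)) :=
          Finset.sum_le_sum step2
      _ = (∑ m ∈ MinF s, ∑ v ∈ g2 m, ec ((s.erase m).erase v))
            + ∑ m ∈ MinF s, ∑ a ∈ g1 m, ec ((s.erase m).erase a) :=
          Finset.sum_add_distrib
      _ = (∑ p ∈ U2, W p) + ∑ p ∈ U1, W p := by
          rw [sum_sum_eq_sum_product hg2s (fun m v => ec ((s.erase m).erase v)),
            sum_sum_eq_sum_product hg1s (fun m v => ec ((s.erase m).erase v))]
      _ = ∑ p ∈ U1 ∪ U2, W p := by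
          rw [Finset.sum_union hdisj]
          exact Nat.add_comm _ _
      _ = ∑ q ∈ (U1 ∪ U2).image φ, W q := by
          rw [Finset.sum_image hinj]
          exact (Finset.sum_congr rfl fun p _ => (hWφ p)).symm
      _ ≤ ∑ q ∈ T, W q := by
          refine Finset.sum_le_sum_of_subset ?_
          intro q hq
          obtain ⟨p, hp, rfl⟩ := Finset.mem_image.1 hq
          exact hmapsto p hp
      _ = ∑ m ∈ M, ec (s.erase m) := by
          have hgsub : ∀ μ ∈ M, MinF (s.erase μ) ⊆ s :=
            fun μ _ => MinF_subset.trans (Finset.erase_subset _ _)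
          simp only [hW, hT]
          rw [← sum_sum_eq_sum_product (X := M) (g := fun μ => MinF (s.erase μ)) hgsub
            (fun m v => ec ((s.erase m).erase v))]
          refine Finset.sum_congr rfl fun μ hμ => ?_
          have hμM : μ ∈ MinF s := (Finset.mem_filter.1 hμ).1
          obtain ⟨a, haA, hμa⟩ := (Finset.mem_filter.1 hμ).2
          have hne : (s.erase μ).Nonempty :=
            ⟨a, Finset.mem_erase.2 ⟨(ne_of_lt hμa).symm, hAs haA⟩⟩
          exact (ec_rec hne).symm


open scoped Classical in
theorem key (δ : α → Bool) (s : Finset α) :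
    ∑ a ∈ Fst δ s, ec (s.erase a) ≤ ec s := by
  classical
  by_cases hs : s.Nonempty
  · set A : Finset α := (Fst δ s).filter (fun a => ∃ z ∈ s, z < a) with hA
    set B : Finset α := (Fst δ s).filter (fun a => ¬ ∃ z ∈ s, z < a) with hB
    have hFsub : Fst δ s ⊆ s := Finset.filter_subset _ _
    have hAdelta : ∀ a ∈ A, δ a = true := by
      intro a ha
      obtain ⟨haF, z, hz, hza⟩ := Finset.mem_filter.1 ha
      obtain ⟨-, hc1, -⟩ := Finset.mem_filter.1 haF
      rcases hc1 with h | h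
      · exact h
      · exact absurd hza (h z hz)
    have hdkey := dkey s.card s A le_rfl
      ((Finset.filter_subset _ _).trans hFsub)
      (by
        intro a ha b hb hab hlt
        have haF := (Finset.mem_filter.1 ha).1
        obtain ⟨-, -, hc2⟩ := Finset.mem_filter.1 haF
        have hbs : b ∈ s := hFsub (Finset.mem_filter.1 hb).1
        have := hc2 b hbs hlt
        rw [hAdelta b hb] at this
        exact Bool.true_eq_false ▸ this)
      (fun a ha => (Finset.mem_filter.1 ha).2)
    -- identify the two target sets
    have hMA : (MinF s).filter (fun m => ∃ a ∈ A, m < a)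
        = (MinF s).filter (fun m => m ∉ Fst δ s) := by
      ext m
      simp only [Finset.mem_filter, and_congr_right_iff]
      intro hmM
      constructor
      · rintro ⟨a, haA, hma⟩ hmF
        obtain ⟨-, -, hc2⟩ := Finset.mem_filter.1 hmF
        have := hc2 a (hFsub (Finset.mem_filter.1 haA).1) hma
        rw [hAdelta a haA] at this
        exact Bool.true_eq_false ▸ this
      · intro hmF
        have hms : m ∈ s := MinF_subset hmM
        have hminm : ∀ b ∈ s, ¬ b < m := (mem_MinF.1 hmM).2
        have hv : ∃ v ∈ s, m < v ∧ δ v = true := by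
          by_contra hno
          push_neg at hno
          refine hmF (Finset.mem_filter.2 ⟨hms, Or.inr hminm, fun v hv hmv => ?_⟩)
          cases hdv : δ v
          · rfl
          · exact absurd hdv (hno v hv hmv)
        obtain ⟨v, hvs, hmv, hdv⟩ := hv
        obtain ⟨l, hl, hlmax⟩ := (s.filter (fun u => δ u = true ∧ m < u)).exists_maximal
          ⟨v, Finset.mem_filter.2 ⟨hvs, hdv, hmv⟩⟩
        obtain ⟨hls, hdl, hml⟩ := Finset.mem_filter.1 hl
        have hlF : l ∈ Fst δ s := by
          refine Finset.mem_filter.2 ⟨hls, Or.inl hdl, fun u hu hlu => ?_⟩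
          cases hdu : δ u
          · rfl
          · exact absurd hlu (fun h => lt_irrefl _ (lt_of_lt_of_le h (hlmax (Finset.mem_filter.2 ⟨hu, hdu, lt_trans hml hlu⟩) h.le)))
        exact ⟨l, Finset.mem_filter.2 ⟨hlF, m, hms, hml⟩, hml⟩
    have hB : B = (MinF s).filter (fun m => m ∈ Fst δ s) := by
      ext a
      simp only [hB, Finset.mem_filter]
      constructor
      · rintro ⟨haF, hnz⟩
        push_neg at hnz
        exact ⟨mem_MinF.2 ⟨hFsub haF, hnz⟩, haF⟩
      · rintro ⟨haM, haF⟩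
        refine ⟨haF, ?_⟩
        push_neg
        exact (mem_MinF.1 haM).2
    calc ∑ a ∈ Fst δ s, ec (s.erase a)
        = (∑ a ∈ A, ec (s.erase a)) + ∑ a ∈ B, ec (s.erase a) :=
          (Finset.sum_filter_add_sum_filter_not (Fst δ s) _ _).symm
      _ ≤ (∑ m ∈ (MinF s).filter (fun m => m ∉ Fst δ s), ec (s.erase m))
            + ∑ m ∈ (MinF s).filter (fun m => m ∈ Fst δ s), ec (s.erase m) := by
          rw [← hMA, ← hB]
          exact Nat.add_le_add_right hdkey _
      _ = ∑ m ∈ MinF s, ec (s.erase m) := by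
          rw [Nat.add_comm]
          exact Finset.sum_filter_add_sum_filter_not (MinF s) _ _
      _ = ec s := (ec_rec hs).symm
  · have : Fst δ s = ∅ := by
      rw [Finset.not_nonempty_iff_eq_empty.1 hs]
      simp [Fst]
    rw [this]
    simp

theorem ec_erase_le : ∀ (n : ℕ) (s : Finset α) (x : α), s.card ≤ n → x ∈ s →
    ec (s.erase x) ≤ ec s := by
  intro n
  induction n with
  | zero =>
    intro s x hcard hx
    rw [Finset.card_eq_zero.1 (Nat.le_zero.1 hcard)] at hx
    simp at hx
  | succ n ih =>
    intro s x hcard hx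
    have hs : s.Nonempty := ⟨x, hx⟩
    by_cases hxm : x ∈ MinF s
    · rw [ec_rec hs]
      exact Finset.single_le_sum (f := fun m => ec (s.erase m))
        (fun _ _ => Nat.zero_le _) hxm
    · have hzx : ∃ z ∈ s, z < x := by
        by_contra hno
        push_neg at hno
        exact hxm (mem_MinF.2 ⟨hx, hno⟩)
      obtain ⟨z, hz, hzlt⟩ := hzx
      have hne : (s.erase x).Nonempty := ⟨z, Finset.mem_erase.2 ⟨ne_of_lt hzlt, hz⟩⟩
      rw [ec_rec hne, MinF_erase_eq ⟨z, hz, hzlt⟩, ec_rec hs]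
      refine Finset.sum_le_sum fun m hm => ?_
      have hxm' : x ≠ m := by
        rintro rfl
        exact (mem_MinF.1 hm).2 z hz hzlt
      have hxe : x ∈ s.erase m := Finset.mem_erase.2 ⟨hxm', hx⟩
      have hc : (s.erase m).card ≤ n := by
        have := Finset.card_erase_of_mem (MinF_subset hm)
        omega
      rw [Finset.erase_right_comm]
      exact ih (s.erase m) x hc hxe

theorem ec_erase_lt : ∀ (n : ℕ) (s : Finset α) (x y : α), s.card ≤ n → x ∈ s → y ∈ s →
    ¬ x ≤ y → ¬ y ≤ x → ec (s.erase x) < ec s := by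
  intro n
  induction n with
  | zero =>
    intro s x y hcard hx _ _ _
    rw [Finset.card_eq_zero.1 (Nat.le_zero.1 hcard)] at hx
    simp at hx
  | succ n ih =>
    intro s x y hcard hx hy hxy hyx
    have hs : s.Nonempty := ⟨x, hx⟩
    by_cases hxm : x ∈ MinF s
    · -- find a minimal element below y, it differs from x
      obtain ⟨m, hm, hmin⟩ := (s.filter (fun u => u ≤ y)).exists_minimal
        ⟨y, Finset.mem_filter.2 ⟨hy, le_refl y⟩⟩
      obtain ⟨hms, hmy⟩ := Finset.mem_filter.1 hm
      have hmM : m ∈ MinF s := by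
        refine mem_MinF.2 ⟨hms, fun b hb hbm => ?_⟩
        exact lt_irrefl _ (lt_of_lt_of_le hbm (hmin (Finset.mem_filter.2 ⟨hb, le_of_lt (lt_of_lt_of_le hbm hmy)⟩) hbm.le))
      have hmx : m ≠ x := by
        rintro rfl
        exact hxy hmy
      have hsub : {x, m} ⊆ MinF s := by
        intro u hu
        rcases Finset.mem_insert.1 hu with rfl | hu
        · exact hxm
        · rwa [Finset.mem_singleton.1 hu]
      calc ec (s.erase x) < ec (s.erase x) + ec (s.erase m) :=
            Nat.lt_add_of_pos_right (ec_pos _)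
        _ = ∑ u ∈ ({x, m} : Finset α), ec (s.erase u) := by
            rw [Finset.sum_pair (Ne.symm hmx)]
        _ ≤ ∑ u ∈ MinF s, ec (s.erase u) :=
            Finset.sum_le_sum_of_subset hsub
        _ = ec s := (ec_rec hs).symm
    · have hzx : ∃ z ∈ s, z < x := by
        by_contra hno
        push_neg at hno
        exact hxm (mem_MinF.2 ⟨hx, hno⟩)
      obtain ⟨z, hz, hzlt⟩ := hzx
      -- a minimal element below x, distinct from y
      obtain ⟨m', hm', hmin'⟩ := (s.filter (fun u => u ≤ x)).exists_minimal
        ⟨x, Finset.mem_filter.2 ⟨hx, le_refl x⟩⟩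
      obtain ⟨hm's, hm'x⟩ := Finset.mem_filter.1 hm'
      have hm'M : m' ∈ MinF s := by
        refine mem_MinF.2 ⟨hm's, fun b hb hbm => ?_⟩
        exact lt_irrefl _ (lt_of_lt_of_le hbm (hmin' (Finset.mem_filter.2 ⟨hb, le_of_lt (lt_of_lt_of_le hbm hm'x)⟩) hbm.le))
      have hm'y : m' ≠ y := by
        rintro rfl
        exact hyx hm'x
      have hne : (s.erase x).Nonempty := ⟨z, Finset.mem_erase.2 ⟨ne_of_lt hzlt, hz⟩⟩
      rw [ec_rec hne, MinF_erase_eq ⟨z, hz, hzlt⟩, ec_rec hs]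
      refine Finset.sum_lt_sum ?_ ⟨m', hm'M, ?_⟩
      · intro m hm
        have hxm' : x ≠ m := by
          rintro rfl
          exact (mem_MinF.1 hm).2 z hz hzlt
        have hc : (s.erase m).card ≤ n := by
          have := Finset.card_erase_of_mem (MinF_subset hm)
          omega
        rw [Finset.erase_right_comm]
        exact ec_erase_le n (s.erase m) x hc (Finset.mem_erase.2 ⟨hxm', hx⟩)
      · have hxm' : x ≠ m' := by
          rintro rfl
          exact (mem_MinF.1 hm'M).2 z hz hzlt
        have hc : (s.erase m').card ≤ n := by
          have := Finset.card_erase_of_mem (MinF_subset hm'M)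
          omega
        rw [Finset.erase_right_comm]
        exact ih (s.erase m') x y hc (Finset.mem_erase.2 ⟨hxm', hx⟩)
          (Finset.mem_erase.2 ⟨Ne.symm hm'y, hy⟩) hxy hyx

theorem main_weak : ∀ (n : ℕ) (s : Finset α) (δ : α → Bool), s.card ≤ n →
    Nc δ s ≤ ec s := by
  intro n
  induction n with
  | zero =>
    intro s δ hcard
    rw [Finset.card_eq_zero.1 (Nat.le_zero.1 hcard)]
    rw [ec, Nc, Nc, legals_empty, legals_empty]
  | succ n ih =>
    intro s δ hcard
    by_cases hs : s.Nonempty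
    · calc Nc δ s = ∑ a ∈ Fst δ s, Nc δ (s.erase a) := Nc_rec hs
        _ ≤ ∑ a ∈ Fst δ s, ec (s.erase a) := by
            refine Finset.sum_le_sum fun a ha => ?_
            have hc : (s.erase a).card ≤ n := by
              have := Finset.card_erase_of_mem
                ((Finset.filter_subset _ _ : Fst δ s ⊆ s) ha)
              omega
            exact ih (s.erase a) δ hc
        _ ≤ ec s := key δ s
    · rw [Finset.not_nonempty_iff_eq_empty.1 hs]
      rw [ec, Nc, Nc, legals_empty, legals_empty]

theorem main_strict : ∀ (n : ℕ) (s : Finset α) (δ : α → Bool), s.card ≤ n →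
    (∃ x ∈ s, ∃ y ∈ s, ∃ z ∈ s, z < x ∧ z < y ∧ ¬ x ≤ y ∧ ¬ y ≤ x ∧ δ x ≠ δ y) →
    Nc δ s < ec s := by
  intro n
  induction n with
  | zero =>
    intro s δ hcard ⟨x, hx, _⟩
    rw [Finset.card_eq_zero.1 (Nat.le_zero.1 hcard)] at hx
    simp at hx
  | succ n ih =>
    intro s δ hcard hw
    have main_case : ∀ x ∈ s, ∀ y ∈ s, ∀ z ∈ s, z < x → z < y → ¬ x ≤ y → ¬ y ≤ x →
        δ x = true → δ y = false → Nc δ s < ec s := by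
      intro x hx y hy z hz hzx hzy hxy hyx hdx hdy
      have hs : s.Nonempty := ⟨x, hx⟩
      by_cases hex : ∃ a ∈ Fst δ s,
          ∃ x' ∈ s.erase a, ∃ y' ∈ s.erase a, ∃ z' ∈ s.erase a,
            z' < x' ∧ z' < y' ∧ ¬ x' ≤ y' ∧ ¬ y' ≤ x' ∧ δ x' ≠ δ y'
      · obtain ⟨a, haF, hw'⟩ := hex
        have hcae : (s.erase a).card ≤ n := by
          have := Finset.card_erase_of_mem
            ((Finset.filter_subset _ _ : Fst δ s ⊆ s) haF)
          omega
        calc Nc δ s = ∑ a' ∈ Fst δ s, Nc δ (s.erase a') := Nc_rec hs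
          _ < ∑ a' ∈ Fst δ s, ec (s.erase a') := by
              refine Finset.sum_lt_sum ?_ ⟨a, haF, ?_⟩
              · intro a' ha'
                have hc : (s.erase a').card ≤ n := by
                  have := Finset.card_erase_of_mem
                    ((Finset.filter_subset _ _ : Fst δ s ⊆ s) ha')
                  omega
                exact main_weak n (s.erase a') δ hc
              · exact ih (s.erase a) δ hcae hw'
          _ ≤ ec s := key δ s
      · -- Fst δ s ⊆ {x}
        have hxyne : x ≠ y := fun h => hxy (le_of_eq h)
        have hzxne : z ≠ x := ne_of_lt hzx
        have hzyne : z ≠ y := ne_of_lt hzy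
        have hsub : Fst δ s ⊆ {x} := by
          intro a haF
          rw [Finset.mem_singleton]
          by_contra hax
          have hay : a ≠ y := by
            rintro rfl
            obtain ⟨-, hc1, -⟩ := Finset.mem_filter.1 haF
            rcases hc1 with h | h
            · rw [h] at hdy; exact Bool.true_eq_false ▸ (hdy ▸ rfl)
            · exact h z hz hzy
          have haz : a ≠ z := by
            rintro rfl
            obtain ⟨-, -, hc2⟩ := Finset.mem_filter.1 haF
            have := hc2 x hx hzx
            rw [hdx] at this
            exact Bool.true_eq_false ▸ this
          exact hex ⟨a, haF, x, Finset.mem_erase.2 ⟨(Ne.symm hax), hx⟩,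
            y, Finset.mem_erase.2 ⟨(Ne.symm hay), hy⟩,
            z, Finset.mem_erase.2 ⟨(Ne.symm haz), hz⟩,
            hzx, hzy, hxy, hyx, by rw [hdx, hdy]; simp⟩
        rcases Finset.subset_singleton_iff.1 hsub with hF0 | hFx
        · rw [Nc_rec hs, hF0]
          simpa using ec_pos s
        · rw [Nc_rec hs, hFx, Finset.sum_singleton]
          calc Nc δ (s.erase x) ≤ ec (s.erase x) := by
                have hc : (s.erase x).card ≤ n := by
                  have := Finset.card_erase_of_mem hx
                  omega
                exact main_weak n (s.erase x) δ hc
            _ < ec s := ec_erase_lt (n+1) s x y hcard hx hy hxy hyx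
    obtain ⟨x, hx, y, hy, z, hz', hzx, hzy, hxy, hyx, hd⟩ := hw
    by_cases hdx : δ x = true
    · have hdy : δ y = false := by
        cases hy' : δ y
        · rfl
        · rw [hdx, hy'] at hd; exact absurd rfl hd
      exact main_case x hx y hy z hz' hzx hzy hxy hyx hdx hdy
    · have hdx' : δ x = false := by
        cases hx' : δ x
        · rfl
        · exact absurd hx' hdx
      have hdy : δ y = true := by
        cases hy' : δ y
        · rw [hdx', hy'] at hd; exact absurd rfl hd
        · rfl
      exact main_case y hy x hx z hz' hzy hzx hyx hxy hdy hdx'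


lemma deltaLegal_iff_pairwise {n : ℕ} {α : Type*} [PartialOrder α] (σ : Fin n ≃ α)
    (δ : α → Bool) :
    DeltaLegal δ σ ↔ ∀ ⦃i j : Fin n⦄, i < j → Rc δ (σ i) (σ j) := by
  constructor
  · intro h i j hij
    constructor
    · intro hlt
      cases hd : δ (σ j)
      · rfl
      · have := (h (σ j) (σ i) hlt).1 hd
        simp only [Equiv.symm_apply_apply] at this
        exact absurd hij (not_lt_of_gt this)
    · intro hlt
      cases hd : δ (σ i)
      · have := (h (σ i) (σ j) hlt).2 hd
        simp only [Equiv.symm_apply_apply] at this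
        exact absurd hij (not_lt_of_gt this)
      · rfl
  · intro h x y hyx
    constructor
    · intro hdx
      rcases lt_trichotomy (σ.symm x) (σ.symm y) with hlt | heq | hlt
      · exact hlt
      · exfalso
        have : x = y := by
          have := congrArg σ heq
          simpa using this
        exact absurd (this ▸ hyx) (lt_irrefl _)
      · exfalso
        have := (h hlt).1
        simp only [Equiv.apply_symm_apply] at this
        have hd := this hyx
        rw [hdx] at hd
        simp at hd
    · intro hdx
      rcases lt_trichotomy (σ.symm y) (σ.symm x) with hlt | heq | hlt
      · exact hlt
      · exfalso
        have : y = x := by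
          have := congrArg σ heq
          simpa using this
        exact absurd (this ▸ hyx) (lt_irrefl _)
      · exfalso
        have := (h hlt).2
        simp only [Equiv.apply_symm_apply] at this
        have hd := this hyx
        rw [hdx] at hd
        simp at hd

open scoped Classical in
lemma card_filter_eq_Nc {α : Type*} [PartialOrder α] [Fintype α] (δ : α → Bool) {n : ℕ}
    (h : Fintype.card α = n) :
    (Finset.univ.filter fun σ : Fin n ≃ α => DeltaLegal δ σ).card
      = Nc δ (Finset.univ : Finset α) := by
  classical
  rw [Nc]
  refine Finset.card_bij (fun σ _ => List.ofFn ⇑σ) ?_ ?_ ?_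
  · intro σ hσ
    have hDL : DeltaLegal δ σ := (Finset.mem_filter.1 hσ).2
    refine mem_legals.2 ⟨List.nodup_ofFn.2 σ.injective, ?_, ?_⟩
    · apply Finset.eq_univ_iff_forall.2
      intro p
      rw [List.mem_toFinset, List.mem_ofFn]
      exact ⟨σ.symm p, σ.apply_symm_apply p⟩
    · rw [List.pairwise_ofFn]
      intro i j hij
      exact (deltaLegal_iff_pairwise σ δ).1 hDL hij
  · intro σ hσ σ' hσ' heq
    exact Equiv.coe_fn_injective (List.ofFn_inj.1 heq)
  · intro l hl
    obtain ⟨hnd, htf, hpw⟩ := mem_legals.1 hl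
    have hmem : ∀ x : α, x ∈ l := by
      intro x
      rw [← List.mem_toFinset, htf]
      exact Finset.mem_univ x
    have hlen : l.length = n := by
      have h1 := List.toFinset_card_of_nodup hnd
      rw [htf, Finset.card_univ, h] at h1
      omega
    set e := List.Nodup.getEquivOfForallMemList l hnd hmem with he
    set σ : Fin n ≃ α := (finCongr hlen.symm).trans e with hσdef
    have hofn : List.ofFn ⇑σ = l := by
      refine List.ext_getElem (by simp [hlen]) ?_
      intro i h1 h2
      simp only [List.getElem_ofFn, hσdef, Equiv.trans_apply, finCongr_apply, he]
      simp [List.Nodup.getEquivOfForallMemList, Fin.cast]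
    refine ⟨σ, Finset.mem_filter.2 ⟨Finset.mem_univ _, ?_⟩, hofn⟩
    refine (deltaLegal_iff_pairwise σ δ).2 ?_
    intro i j hij
    have := List.pairwise_ofFn.1 (hofn ▸ hpw)
    exact this hij

end LegalAux

theorem card_delta_legal_lt_card_linear_extensions {n : ℕ} {P : Type*}
    [PartialOrder P] [Fintype P] (hcard : Fintype.card P = n) (δ : P → Bool)
    (h : ∃ x y z : P, z < x ∧ z < y ∧ ¬ x ≤ y ∧ ¬ y ≤ x ∧ δ x ≠ δ y) :
    (Finset.univ.filter fun σ : Fin n ≃ P => DeltaLegal δ σ).card <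
      (Finset.univ.filter fun σ : Fin n ≃ P => ∀ i j : Fin n, σ i < σ j → i < j).card := by
  classical
  obtain ⟨x, y, z, hzx, hzy, hxy, hyx, hd⟩ := h
  have hfilter : (Finset.univ.filter fun σ : Fin n ≃ P => ∀ i j : Fin n, σ i < σ j → i < j)
      = Finset.univ.filter fun σ : Fin n ≃ P => DeltaLegal (fun _ => false) σ := by
    apply Finset.filter_congr
    intro σ _
    constructor
    · intro hLE a b hba
      refine ⟨fun habs => by simp at habs, fun _ => ?_⟩
      have : σ (σ.symm b) < σ (σ.symm a) := by
        simpa using hba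
      exact hLE _ _ this
    · intro hDL i j hlt
      have := (hDL (σ j) (σ i) hlt).2 rfl
      simpa using this
  rw [hfilter, LegalAux.card_filter_eq_Nc δ hcard,
    LegalAux.card_filter_eq_Nc (fun _ => false) hcard]
  have := LegalAux.main_strict (Finset.univ : Finset P).card Finset.univ δ le_rfl
    ⟨x, Finset.mem_univ _, y, Finset.mem_univ _, z, Finset.mem_univ _,
      hzx, hzy, hxy, hyx, hd⟩
  exact this
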